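/- For n = 2m+1 odd with a > -1 and b > -1, all eigenvalues of H_n(a,b) are real and distinct, and the spectrum is symmetric about 0 (λ is an eigenvalue iff -λ is). -/

import Mathlib

open Polynomial Matrix

/-- The `(n+1) × (n+1)` matrix `H_n(a,b)`: tridiagonal with zero diagonal,
superdiagonal entries `h_{k,k+1} = k` (`k` even) or `k + a` (`k` odd), and
subdiagonal entries `h_{n+2-k,n+1-k} = k` (`k` even) or `k + b` (`k` odd),
for `k = 1, ..., n` (1-based indexing). -/
def Hmat (n : ℕ) (a b : ℝ) : Matrix (Fin (n + 1)) (Fin (n + 1)) ℝ :=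
  Matrix.of fun i j =>
    if (i : ℕ) + 1 = (j : ℕ) then
      (if ((i : ℕ) + 1) % 2 = 0 then ((i : ℕ) + 1 : ℝ) else ((i : ℕ) + 1 : ℝ) + a)
    else if (j : ℕ) + 1 = (i : ℕ) then
      (if (n - (j : ℕ)) % 2 = 0 then ((n - (j : ℕ) : ℕ) : ℝ)
       else ((n - (j : ℕ) : ℕ) : ℝ) + b)
    else 0

/-! ### Auxiliary definitions and lemmas -/

/-- charpoly is invariant under a similarity relation `P * A = B * P` with `P` invertible. -/
lemma Hmat.charpoly_eq_of_mul {N : ℕ} (P A B : Matrix (Fin N) (Fin N) ℝ)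
    (hP : P.det ≠ 0) (h : P * A = B * P) : A.charpoly = B.charpoly := by
  have key : (P.map C) * charmatrix A = charmatrix B * (P.map C) := by
    rw [charmatrix, charmatrix]
    have h1 : (P.map C) * (Matrix.scalar (Fin N) (X:ℝ[X])) =
        (Matrix.scalar (Fin N) (X:ℝ[X])) * (P.map C) := by
      rw [scalar_commute]
      intro r; exact mul_comm _ _
    have h2 : (P.map C) * (A.map C) = (B.map C) * (P.map C) := by
      rw [← Matrix.map_mul, ← Matrix.map_mul, h]
    show P.map C * ((Matrix.scalar (Fin N) X) - A.map C)
        = ((Matrix.scalar (Fin N) X) - B.map C) * P.map C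
    rw [mul_sub, sub_mul, h1, h2]
  have := congrArg Matrix.det key
  rw [det_mul, det_mul] at this
  have hPd : (P.map C).det = C P.det := by
    rw [show P.map (C : ℝ → ℝ[X]) = (Polynomial.C.mapMatrix P : Matrix (Fin N) (Fin N) ℝ[X])
      from rfl, ← RingHom.map_det]
  have hC : (C P.det : ℝ[X]) ≠ 0 := by simpa using hP
  unfold Matrix.charpoly
  rw [hPd, mul_comm ((C P.det)) _] at this
  exact mul_right_cancel₀ hC this

noncomputable def Hmat.Emat (n : ℕ) : Matrix (Fin (n+1)) (Fin (n+1)) ℝ :=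
  Matrix.diagonal (fun i => (-1 : ℝ) ^ (i : ℕ))

lemma Hmat.Emat_mul_Emat (n : ℕ) : Emat n * Emat n = 1 := by
  rw [Emat, diagonal_mul_diagonal]
  convert Matrix.diagonal_one
  rw [← pow_add]
  exact Even.neg_one_pow ⟨_, rfl⟩

lemma Hmat.Emat_conj (n : ℕ) (a b : ℝ) : Emat n * Hmat n a b * Emat n = -(Hmat n a b) := by
  ext i j
  rw [Matrix.mul_apply]
  simp only [Emat, Matrix.diagonal_mul, Matrix.neg_apply]
  rw [Finset.sum_eq_single j]
  · simp only [Matrix.diagonal_apply_eq]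
    have key : Hmat n a b i j = 0 ∨ (-1:ℝ)^(i:ℕ) * ((-1:ℝ)^(j:ℕ)) = -1 := by
      by_cases h1 : (i:ℕ) + 1 = (j:ℕ)
      · right
        rw [← h1, pow_succ, ← mul_assoc, ← pow_add]
        simp [Even.neg_one_pow ⟨_, rfl⟩]
      · by_cases h2 : (j:ℕ) + 1 = (i:ℕ)
        · right
          rw [← h2, pow_add]
          ring_nf
          rw [pow_mul]
          rcases Nat.even_or_odd (j:ℕ) with h|h
          · rw [h.neg_one_pow]; ring_nf
          · rw [h.neg_one_pow]; ring_nf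
        · left; simp [Hmat, h1, h2]
    rcases key with h | h
    · simp [h]
    · rw [mul_comm ((-1:ℝ)^(i:ℕ)) (Hmat n a b i j), mul_assoc, h]; ring
  · intro c _ hc
    simp [Matrix.diagonal_apply_ne _ hc]
  · simp

lemma Hmat.spec_symm (n : ℕ) (a b : ℝ) (x : ℝ) :
    x ∈ spectrum ℝ (Hmat n a b) ↔ -x ∈ spectrum ℝ (Hmat n a b) := by
  have hu : (Emat n) * (Emat n) = 1 := Emat_mul_Emat n
  let u : (Matrix (Fin (n+1)) (Fin (n+1)) ℝ)ˣ := ⟨Emat n, Emat n, hu, hu⟩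
  have h1 : spectrum ℝ (-(Hmat n a b)) = spectrum ℝ (Hmat n a b) := by
    rw [← Emat_conj n a b]
    exact spectrum.units_conjugate (u := u)
  have h2 : x ∈ spectrum ℝ (-(Hmat n a b)) ↔ -x ∈ spectrum ℝ (Hmat n a b) := by
    rw [← spectrum.neg_eq, Set.mem_neg]
  rw [← h2, h1]

noncomputable def Hmat.supd (a : ℝ) (i : ℕ) : ℝ :=
  if (i + 1) % 2 = 0 then ((i : ℝ) + 1) else ((i : ℝ) + 1) + a

noncomputable def Hmat.subd (n : ℕ) (b : ℝ) (j : ℕ) : ℝ :=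
  if (n - j) % 2 = 0 then ((n - j : ℕ) : ℝ) else ((n - j : ℕ) : ℝ) + b

lemma Hmat.supd_pos {a : ℝ} (ha : -1 < a) (i : ℕ) : 0 < supd a i := by
  unfold supd; split_ifs
  · positivity
  · have : (0:ℝ) ≤ (i:ℝ) := Nat.cast_nonneg i
    linarith

lemma Hmat.subd_pos {n : ℕ} {b : ℝ} (hb : -1 < b) {j : ℕ} (hj : j < n) : 0 < subd n b j := by
  have h1 : (1:ℝ) ≤ ((n - j : ℕ) : ℝ) := by
    have : 1 ≤ n - j := by omega
    exact_mod_cast this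
  unfold subd; split_ifs
  · linarith
  · linarith

noncomputable def Hmat.ee (n : ℕ) (a b : ℝ) (i : ℕ) : ℝ :=
  Real.sqrt (supd a i * subd n b i)

lemma Hmat.ee_pos {n : ℕ} {a b : ℝ} (ha : -1 < a) (hb : -1 < b) {i : ℕ} (hi : i < n) :
    0 < ee n a b i :=
  Real.sqrt_pos.mpr (mul_pos (supd_pos ha i) (subd_pos hb hi))

noncomputable def Hmat.pp (n : ℕ) (a b : ℝ) : ℕ → ℝ
  | 0 => 1
  | (i+1) => pp n a b i * Real.sqrt (supd a i / subd n b i)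

lemma Hmat.pp_pos {n : ℕ} {a b : ℝ} (ha : -1 < a) (hb : -1 < b) :
    ∀ {i : ℕ}, i ≤ n → 0 < pp n a b i := by
  intro i
  induction i with
  | zero => intro _; exact one_pos
  | succ k ih =>
    intro hk
    have hk' : k < n := by omega
    exact mul_pos (ih (by omega))
      (Real.sqrt_pos.mpr (div_pos (supd_pos ha k) (subd_pos hb hk')))

noncomputable def Hmat.Smat (n : ℕ) (a b : ℝ) : Matrix (Fin (n+1)) (Fin (n+1)) ℝ :=
  Matrix.of fun i j =>
    if (i : ℕ) + 1 = (j : ℕ) then ee n a b i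
    else if (j : ℕ) + 1 = (i : ℕ) then ee n a b j else 0

lemma Hmat.Smat_isHermitian (n : ℕ) (a b : ℝ) : (Smat n a b).IsHermitian := by
  unfold Matrix.IsHermitian
  ext i j
  simp only [conjTranspose_apply, Smat, Matrix.of_apply, star_trivial]
  split_ifs with h1 h2 h2 <;> first | rfl | omega

lemma Hmat.sqrt_id1 {s t : ℝ} (hs : 0 < s) (ht : 0 < t) :
    Real.sqrt (s * t) * Real.sqrt (s / t) = s := by
  rw [← Real.sqrt_mul (by positivity)]
  rw [show s * t * (s / t) = s * s by field_simp]
  exact Real.sqrt_mul_self hs.le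

lemma Hmat.sqrt_id2 {s t : ℝ} (hs : 0 < s) (ht : 0 < t) :
    Real.sqrt (s / t) * t = Real.sqrt (s * t) := by
  rw [show s * t = (s / t) * (t * t) by field_simp,
    Real.sqrt_mul (by positivity), Real.sqrt_mul_self ht.le]

lemma Hmat.Hmat_eq (n : ℕ) (a b : ℝ) (i j : Fin (n+1)) :
    Hmat n a b i j =
      if (i : ℕ) + 1 = (j : ℕ) then supd a i
      else if (j : ℕ) + 1 = (i : ℕ) then subd n b j else 0 := rfl

lemma Hmat.conj_eq {n : ℕ} {a b : ℝ} (ha : -1 < a) (hb : -1 < b) :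
    (Matrix.diagonal fun i : Fin (n+1) => pp n a b i) * Hmat n a b
      = Smat n a b * (Matrix.diagonal fun i : Fin (n+1) => pp n a b i) := by
  ext i j
  rw [Matrix.diagonal_mul, Matrix.mul_diagonal]
  rw [Hmat_eq]
  simp only [Smat, Matrix.of_apply]
  by_cases h1 : (i : ℕ) + 1 = (j : ℕ)
  · rw [if_pos h1, if_pos h1]
    have hij : (i:ℕ) < n := by omega
    have hj : (j:ℕ) = (i:ℕ) + 1 := h1.symm
    rw [hj]
    show pp n a b i * supd a i = ee n a b i * pp n a b ((i:ℕ)+1)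
    rw [show pp n a b ((i:ℕ)+1) = pp n a b i * Real.sqrt (supd a i / subd n b i) from rfl]
    rw [ee, ← mul_assoc, mul_comm (Real.sqrt _) (pp n a b _), mul_assoc,
      mul_comm (pp n a b (i:ℕ)) _]
    rw [sqrt_id1 (supd_pos ha _) (subd_pos hb hij), mul_comm]
  · rw [if_neg h1, if_neg h1]
    by_cases h2 : (j : ℕ) + 1 = (i : ℕ)
    · rw [if_pos h2, if_pos h2]
      have hjn : (j:ℕ) < n := by omega
      have hi : (i:ℕ) = (j:ℕ) + 1 := h2.symm
      rw [hi]
      show pp n a b ((j:ℕ)+1) * subd n b j = ee n a b j * pp n a b j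
      rw [show pp n a b ((j:ℕ)+1) = pp n a b j * Real.sqrt (supd a j / subd n b j) from rfl]
      rw [mul_assoc, sqrt_id2 (supd_pos ha _) (subd_pos hb hjn), ← ee, mul_comm]
    · rw [if_neg h2, if_neg h2, zero_mul, mul_zero]

lemma Hmat.tri_mulVec {N : ℕ} (f : ℕ → ℝ) (x : Fin (N+1) → ℝ) (i : Fin (N+1)) :
    ((Matrix.of fun i j : Fin (N+1) =>
        if (i:ℕ)+1 = (j:ℕ) then f i else if (j:ℕ)+1 = (i:ℕ) then f j else 0) *ᵥ x) i
    = (if h : (i:ℕ)+1 < N+1 then f i * x ⟨(i:ℕ)+1, h⟩ else 0)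
      + (if h : 0 < (i:ℕ) then f ((i:ℕ)-1) * x ⟨(i:ℕ)-1, by omega⟩ else 0) := by
  rw [Matrix.mulVec, dotProduct]
  have split : ∀ j : Fin (N+1),
      (Matrix.of fun i j : Fin (N+1) =>
        if (i:ℕ)+1 = (j:ℕ) then f i else if (j:ℕ)+1 = (i:ℕ) then f j else 0) i j * x j
      = (if (i:ℕ)+1 = (j:ℕ) then f i * x j else 0)
        + (if (j:ℕ)+1 = (i:ℕ) then f j * x j else 0) := by
    intro j
    simp only [Matrix.of_apply]
    split_ifs with h1 h2 <;> try omega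
    all_goals ring
  rw [Finset.sum_congr rfl (fun j _ => split j), Finset.sum_add_distrib]
  congr 1
  · by_cases h : (i:ℕ)+1 < N+1
    · rw [dif_pos h, Finset.sum_eq_single (⟨(i:ℕ)+1, h⟩ : Fin (N+1))]
      · rw [if_pos rfl]
      · intro c _ hc
        rw [if_neg]
        intro hcon
        exact hc (by ext; simp [← hcon])
      · simp
    · rw [dif_neg h, Finset.sum_eq_zero]
      intro c _
      rw [if_neg]
      omega
  · by_cases h : 0 < (i:ℕ)
    · rw [dif_pos h, Finset.sum_eq_single (⟨(i:ℕ)-1, by omega⟩ : Fin (N+1))]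
      · rw [if_pos (by simp; omega)]
      · intro c _ hc
        rw [if_neg]
        intro hcon
        exact hc (by ext; simp; omega)
      · simp
    · rw [dif_neg h, Finset.sum_eq_zero]
      intro c _
      rw [if_neg]
      omega

lemma Hmat.Smat_ker {n : ℕ} {a b : ℝ} (ha : -1 < a) (hb : -1 < b)
    (x : Fin (n+1) → ℝ) (c : ℝ)
    (hx : Smat n a b *ᵥ x = c • x) (h0 : x 0 = 0) : x = 0 := by
  have key : ∀ j : ℕ, ∀ hj : j < n + 1, x ⟨j, hj⟩ = 0 := by
    intro j
    induction j using Nat.strong_induction_on with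
    | _ j ih =>
      match j with
      | 0 => intro hj; rw [Fin.mk_zero]; exact h0
      | (j+1) =>
        intro hj
        have hjn : j < n := by omega
        have hrow := congrFun hx ⟨j, by omega⟩
        rw [show Smat n a b = Matrix.of fun i j : Fin (n+1) =>
            if (i:ℕ)+1 = (j:ℕ) then ee n a b i else if (j:ℕ)+1 = (i:ℕ) then ee n a b j else 0
            from rfl] at hrow
        rw [tri_mulVec] at hrow
        simp only [Pi.smul_apply, smul_eq_mul] at hrow
        rw [dif_pos (show (((⟨j, by omega⟩ : Fin (n+1)) : ℕ)+1 < n+1) by simpa using hj)] at hrow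
        have hxj : x ⟨j, by omega⟩ = 0 := ih j (by omega) _
        rw [hxj, mul_zero] at hrow
        have hsecond : (if h : 0 < ((⟨j, by omega⟩ : Fin (n+1)) : ℕ) then
            ee n a b (((⟨j, by omega⟩ : Fin (n+1)) : ℕ)-1) *
              x ⟨(((⟨j, by omega⟩ : Fin (n+1)) : ℕ))-1, by omega⟩ else 0) = 0 := by
          by_cases hjpos : 0 < j
          · rw [dif_pos (by simpa using hjpos)]
            have : x ⟨j - 1, by omega⟩ = 0 := ih (j-1) (by omega) _
            simp only [this, mul_zero]
          · rw [dif_neg (by simpa using hjpos)]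
        rw [hsecond, add_zero] at hrow
        have hepos := ee_pos (n := n) (a := a) (b := b) ha hb hjn
        have : x ⟨j+1, hj⟩ = 0 := by
          rcases mul_eq_zero.mp hrow with h | h
          · exact absurd h hepos.ne'
          · exact h
        exact this
  funext i
  have := key i.1 i.2
  simpa [Fin.eta] using this

lemma Hmat.mu_inj {n : ℕ} {a b : ℝ} (ha : -1 < a) (hb : -1 < b) :
    Function.Injective (Smat_isHermitian n a b).eigenvalues := by
  set hS := Smat_isHermitian n a b with hhS
  intro i j hij
  by_contra hne
  set B := hS.eigenvectorBasis with hB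
  have horth := B.orthonormal
  rw [orthonormal_iff_ite] at horth
  have hVi := hS.mulVec_eigenvectorBasis i
  have hVj := hS.mulVec_eigenvectorBasis j
  set V : EuclideanSpace ℝ (Fin (n+1)) := B i with hV
  set W : EuclideanSpace ℝ (Fin (n+1)) := B j with hW
  set u : EuclideanSpace ℝ (Fin (n+1)) := W 0 • V - V 0 • W with hu
  have hmu : Smat n a b *ᵥ (u : Fin (n+1) → ℝ) = hS.eigenvalues i • (u : Fin (n+1) → ℝ) := by
    have hVi' : Smat n a b *ᵥ (V : Fin (n+1) → ℝ)
        = hS.eigenvalues i • (V : Fin (n+1) → ℝ) := hVi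
    have hVj' : Smat n a b *ᵥ (W : Fin (n+1) → ℝ)
        = hS.eigenvalues j • (W : Fin (n+1) → ℝ) := hVj
    show Smat n a b *ᵥ (W 0 • (V : Fin (n+1) → ℝ) - V 0 • (W : Fin (n+1) → ℝ))
      = hS.eigenvalues i • (W 0 • (V : Fin (n+1) → ℝ) - V 0 • (W : Fin (n+1) → ℝ))
    rw [Matrix.mulVec_sub, Matrix.mulVec_smul, Matrix.mulVec_smul, hVi', hVj', hij]
    module
  have hu0 : (u : Fin (n+1) → ℝ) 0 = 0 := by
    show W 0 * V 0 - V 0 * W 0 = 0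
    ring
  have huz : (u : Fin (n+1) → ℝ) = 0 := Smat_ker ha hb _ _ hmu hu0
  have huz' : u = 0 := by
    exact (WithLp.ofLp_eq_zero 2).mp huz
  have hinner1 : (inner ℝ V u : ℝ) = W 0 := by
    rw [hu, inner_sub_right, real_inner_smul_right, real_inner_smul_right]
    have h1 : (inner ℝ V V : ℝ) = 1 := by have := horth i i; rw [if_pos rfl] at this; exact this
    have h2 : (inner ℝ V W : ℝ) = 0 := by have := horth i j; rw [if_neg hne] at this; exact this
    rw [h1, h2]; ring
  have hinner2 : (inner ℝ W u : ℝ) = -(V 0) := by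
    rw [hu, inner_sub_right, real_inner_smul_right, real_inner_smul_right]
    have h1 : (inner ℝ W W : ℝ) = 1 := by have := horth j j; rw [if_pos rfl] at this; exact this
    have h2 : (inner ℝ W V : ℝ) = 0 := by
      have := horth j i
      rw [if_neg (Ne.symm hne)] at this; exact this
    rw [h1, h2]; ring
  rw [huz', inner_zero_right] at hinner1 hinner2
  have hV0 : V 0 = 0 := by linarith [hinner2.symm]
  have hVi' : Smat n a b *ᵥ (V : Fin (n+1) → ℝ)
      = hS.eigenvalues i • (V : Fin (n+1) → ℝ) := hVi
  have hVz : (V : Fin (n+1) → ℝ) = 0 := Smat_ker ha hb _ _ hVi' hV0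
  have : (inner ℝ V V : ℝ) = 1 := by have := horth i i; rw [if_pos rfl] at this; exact this
  rw [show V = 0 from (WithLp.ofLp_eq_zero 2).mp hVz, inner_zero_right] at this
  exact one_ne_zero this.symm

lemma Hmat.charpoly_Smat (n : ℕ) (a b : ℝ) :
    (Smat n a b).charpoly
      = ∏ i : Fin (n+1), (X - C ((Smat_isHermitian n a b).eigenvalues i)) := by
  set hS := Smat_isHermitian n a b
  set U : Matrix (Fin (n+1)) (Fin (n+1)) ℝ :=
    (hS.eigenvectorUnitary : Matrix (Fin (n+1)) (Fin (n+1)) ℝ) with hU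
  have hmem := hS.eigenvectorUnitary.2
  have h1 : U * star U = 1 := (Matrix.mem_unitaryGroup_iff).mp hmem
  have h2 : star U * U = 1 := (Matrix.mem_unitaryGroup_iff').mp hmem
  have hdet : U.det ≠ 0 := by
    intro h
    have := congrArg Matrix.det h1
    rw [Matrix.det_mul, h, zero_mul, Matrix.det_one] at this
    exact zero_ne_one this
  have hst := hS.spectral_theorem
  set D : Matrix (Fin (n+1)) (Fin (n+1)) ℝ :=
    Matrix.diagonal (RCLike.ofReal ∘ hS.eigenvalues) with hD
  have hcomm : U * D = Smat n a b * U := by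
    calc U * D = U * D * 1 := by rw [mul_one]
    _ = U * D * (star U * U) := by rw [h2]
    _ = (U * D * star U) * U := by noncomm_ring
    _ = Smat n a b * U := by rw [hst, Unitary.conjStarAlgAut_apply]
  have hchar : D.charpoly = (Smat n a b).charpoly := charpoly_eq_of_mul U D _ hdet hcomm
  rw [← hchar]
  have hDdiag : D = Matrix.diagonal hS.eigenvalues := by
    rw [hD]
    congr 1
  rw [hDdiag]
  rw [Matrix.charpoly_of_upperTriangular _ (Matrix.blockTriangular_diagonal _)]
  simp [Matrix.diagonal_apply_eq]

lemma Hmat.roots_card {N : ℕ} (μ : Fin N → ℝ) (hinj : Function.Injective μ) :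
    (∏ i : Fin N, (X - C (μ i))).roots.toFinset.card = N := by
  have h1 : (∏ i : Fin N, (X - C (μ i)))
      = ((Finset.univ.val.map μ).map (fun r : ℝ => X - C r)).prod := by
    rw [Multiset.map_map]
    rfl
  rw [h1, Polynomial.roots_multiset_prod_X_sub_C, Multiset.toFinset_map,
    Finset.val_toFinset, Finset.card_image_of_injective _ hinj, Finset.card_univ,
    Fintype.card_fin]

/-- for `n = 2m+1` odd with `a > -1` and `b > -1`, all eigenvalues of
`H_n(a,b)` are real and distinct (its real characteristic polynomial, of degree
`n + 1`, has `n + 1` distinct real roots), and the spectrum is symmetric about `0`. -/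
theorem Hmat_odd_distinct_real_symmetric_spectrum (m : ℕ) (a b : ℝ)
    (ha : -1 < a) (hb : -1 < b) :
    (Hmat (2 * m + 1) a b).charpoly.roots.toFinset.card = 2 * m + 2 ∧
      ∀ x : ℝ, x ∈ spectrum ℝ (Hmat (2 * m + 1) a b)
        ↔ -x ∈ spectrum ℝ (Hmat (2 * m + 1) a b) := by
  constructor
  · set n := 2 * m + 1 with hn
    have hdet : (Matrix.diagonal fun i : Fin (n+1) => Hmat.pp n a b i).det ≠ 0 := by
      rw [Matrix.det_diagonal]
      have : ∀ i : Fin (n+1), 0 < Hmat.pp n a b (i : ℕ) := fun i =>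
        Hmat.pp_pos ha hb (by omega)
      exact (Finset.prod_pos fun i _ => this i).ne'
    have hchar : (Hmat n a b).charpoly = (Hmat.Smat n a b).charpoly :=
      Hmat.charpoly_eq_of_mul _ _ _ hdet (Hmat.conj_eq ha hb)
    rw [hchar, Hmat.charpoly_Smat, Hmat.roots_card _ (Hmat.mu_inj ha hb)]
  · exact Hmat.spec_symm (2 * m + 1) a b
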